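/- For every bounded measurable function g : ℝ × E → ℝ, the instrument-propensity weight satisfies the contrast identity E[H·g(Z, X)] = E[g(1, X) − g(0, X)]. -/

import Mathlib

open MeasureTheory ProbabilityTheory

lemma int_bdd_aux {Ω : Type*} [MeasurableSpace Ω] (P : Measure Ω) [IsFiniteMeasure P]
    {f : Ω → ℝ} (hf : Measurable f) (C : ℝ) (h : ∀ ω, |f ω| ≤ C) : Integrable f P :=
  (memLp_top_of_bound hf.aestronglyMeasurable C
    (Filter.Eventually.of_forall (fun ω => by simpa [Real.norm_eq_abs] using h ω))).integrable
    le_top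

lemma key_aux {Ω E : Type*} [MeasurableSpace Ω] [mE : MeasurableSpace E]
    (P : Measure Ω) [IsProbabilityMeasure P]
    (X : Ω → E) (hX : Measurable X)
    (Z : Ω → ℝ) (hZ : Measurable Z) (hZb : ∀ ω, |Z ω| ≤ 1)
    (π : E → ℝ)
    (hπver : P[Z | MeasurableSpace.comap X mE] =ᵐ[P] fun ω => π (X ω))
    (f : E → ℝ) (hf : Measurable f) (C : ℝ) (hfb : ∀ x, |f x| ≤ C) :
    ∫ ω, Z ω * f (X ω) ∂P = ∫ ω, π (X ω) * f (X ω) ∂P := by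
  have hm : MeasurableSpace.comap X mE ≤ ‹MeasurableSpace Ω› := hX.comap_le
  have hXm : Measurable[MeasurableSpace.comap X mE] X := fun s hs => ⟨s, hs, rfl⟩
  have hfX : StronglyMeasurable[MeasurableSpace.comap X mE] (fun ω => f (X ω)) :=
    (hf.comp hXm).stronglyMeasurable
  have hZint : Integrable Z P := int_bdd_aux P hZ 1 hZb
  have hfb' : ∀ x, |f x| ≤ |C| := fun x => (hfb x).trans (le_abs_self C)
  have hfgint : Integrable (fun ω => f (X ω) * Z ω) P := by
    refine int_bdd_aux P ((hf.comp hX).mul hZ) (|C| * 1) (fun ω => ?_)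
    rw [abs_mul]
    exact mul_le_mul (hfb' _) (hZb ω) (abs_nonneg _) (abs_nonneg _)
  have h1 : P[(fun ω => f (X ω) * Z ω) | MeasurableSpace.comap X mE]
      =ᵐ[P] (fun ω => f (X ω)) * P[Z | MeasurableSpace.comap X mE] :=
    condExp_mul_of_stronglyMeasurable_left hfX hfgint hZint
  have h2 : P[(fun ω => f (X ω) * Z ω) | MeasurableSpace.comap X mE]
      =ᵐ[P] fun ω => f (X ω) * π (X ω) := by
    refine h1.trans ?_
    filter_upwards [hπver] with ω hω
    simp [hω]
  calc ∫ ω, Z ω * f (X ω) ∂P = ∫ ω, f (X ω) * Z ω ∂P := by simp [mul_comm]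
    _ = ∫ ω, (P[(fun ω' => f (X ω') * Z ω') | MeasurableSpace.comap X mE]) ω ∂P :=
        (integral_condExp hm).symm
    _ = ∫ ω, f (X ω) * π (X ω) ∂P := integral_congr_ae h2
    _ = ∫ ω, π (X ω) * f (X ω) ∂P := by simp [mul_comm]

theorem propensity_weight_contrast_identity
    {Ω E : Type*} [MeasurableSpace Ω] [mE : MeasurableSpace E]
    (P : Measure Ω) [IsProbabilityMeasure P]
    (X : Ω → E) (hX : Measurable X)
    (Z : Ω → ℝ) (hZ : Measurable Z) (hZbin : ∀ ω, Z ω = 0 ∨ Z ω = 1)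
    (ε : ℝ) (hε : 0 < ε ∧ ε < 1 / 2)
    (π : E → ℝ) (hπ : Measurable π) (hπbd : ∀ x, ε ≤ π x ∧ π x ≤ 1 - ε)
    (hπver : P[Z | MeasurableSpace.comap X mE] =ᵐ[P] fun ω => π (X ω))
    (H : Ω → ℝ) (hH : ∀ ω, H ω = (Z ω - π (X ω)) / (π (X ω) * (1 - π (X ω))))
    (g : ℝ × E → ℝ) (hg : Measurable g) (Cg : ℝ) (hgbd : ∀ p, |g p| ≤ Cg) :
    ∫ ω, H ω * g (Z ω, X ω) ∂P = ∫ ω, (g (1, X ω) - g (0, X ω)) ∂P := by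
  obtain ⟨hε0, hε2⟩ := hε
  set f1 : E → ℝ := fun x => g (1, x) / π x with hf1
  set f0 : E → ℝ := fun x => g (0, x) / (1 - π x) with hf0
  have hπpos : ∀ x, 0 < π x := fun x => lt_of_lt_of_le hε0 (hπbd x).1
  have h1πpos : ∀ x, 0 < 1 - π x := fun x => by have := (hπbd x).2; linarith
  have hπle : ∀ x, |π x| ≤ 1 := fun x => by
    rw [abs_of_pos (hπpos x)]; have := (hπbd x).2; linarith
  have hg1 : Measurable fun x : E => g (1, x) := hg.comp (measurable_const.prodMk measurable_id)
  have hg0 : Measurable fun x : E => g (0, x) := hg.comp (measurable_const.prodMk measurable_id)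
  have hf1m : Measurable f1 := hg1.div hπ
  have hf0m : Measurable f0 := hg0.div (measurable_const.sub hπ)
  have hf1b : ∀ x, |f1 x| ≤ |Cg| / ε := fun x => by
    rw [hf1, abs_div]
    refine div_le_div₀ (abs_nonneg Cg) ((hgbd _).trans (le_abs_self _)) hε0 ?_
    rw [abs_of_pos (hπpos x)]; exact (hπbd x).1
  have hf0b : ∀ x, |f0 x| ≤ |Cg| / ε := fun x => by
    rw [hf0, abs_div]
    refine div_le_div₀ (abs_nonneg Cg) ((hgbd _).trans (le_abs_self _)) hε0 ?_
    rw [abs_of_pos (h1πpos x)]; have := (hπbd x).2; linarith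
  have hZb : ∀ ω, |Z ω| ≤ 1 := fun ω => by rcases hZbin ω with h | h <;> simp [h]
  have e1 := key_aux P X hX Z hZ hZb π hπver f1 hf1m _ hf1b
  have e0 := key_aux P X hX Z hZ hZb π hπver f0 hf0m _ hf0b
  have hpt : ∀ ω, H ω * g (Z ω, X ω) = Z ω * f1 (X ω) - f0 (X ω) + Z ω * f0 (X ω) := by
    intro ω
    have hp := (hπpos (X ω)).ne'
    have hq := (h1πpos (X ω)).ne'
    rcases hZbin ω with h | h <;>
      · rw [hH ω, h, hf1, hf0]
        field_simp
        ring
  have i1 : Integrable (fun ω => Z ω * f1 (X ω)) P := by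
    refine int_bdd_aux P (hZ.mul (hf1m.comp hX)) (1 * (|Cg| / ε)) (fun ω => ?_)
    rw [abs_mul]
    exact mul_le_mul (hZb ω) (hf1b _) (abs_nonneg _) zero_le_one
  have i0 : Integrable (fun ω => f0 (X ω)) P :=
    int_bdd_aux P (hf0m.comp hX) _ (fun ω => hf0b _)
  have i0' : Integrable (fun ω => Z ω * f0 (X ω)) P := by
    refine int_bdd_aux P (hZ.mul (hf0m.comp hX)) (1 * (|Cg| / ε)) (fun ω => ?_)
    rw [abs_mul]
    exact mul_le_mul (hZb ω) (hf0b _) (abs_nonneg _) zero_le_one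
  have iπ0 : Integrable (fun ω => π (X ω) * f0 (X ω)) P := by
    refine int_bdd_aux P ((hπ.comp hX).mul (hf0m.comp hX)) (1 * (|Cg| / ε)) (fun ω => ?_)
    rw [abs_mul]
    exact mul_le_mul (hπle _) (hf0b _) (abs_nonneg _) zero_le_one
  have ig1 : Integrable (fun ω => g (1, X ω)) P :=
    int_bdd_aux P (hg1.comp hX) Cg (fun ω => hgbd _)
  have ig0 : Integrable (fun ω => g (0, X ω)) P :=
    int_bdd_aux P (hg0.comp hX) Cg (fun ω => hgbd _)
  have A : ∫ ω, π (X ω) * f1 (X ω) ∂P = ∫ ω, g (1, X ω) ∂P := by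
    refine integral_congr_ae (Filter.Eventually.of_forall fun ω => ?_)
    rw [hf1]
    field_simp
    exact mul_div_cancel_left₀ _ (hπpos (X ω)).ne'
  have B : ∫ ω, (f0 (X ω) - π (X ω) * f0 (X ω)) ∂P = ∫ ω, g (0, X ω) ∂P := by
    refine integral_congr_ae (Filter.Eventually.of_forall fun ω => ?_)
    have hq := (h1πpos (X ω)).ne'
    rw [hf0]
    field_simp
  have B' : ∫ ω, f0 (X ω) ∂P - ∫ ω, π (X ω) * f0 (X ω) ∂P = ∫ ω, g (0, X ω) ∂P := by
    rw [← integral_sub i0 iπ0]; exact B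
  calc ∫ ω, H ω * g (Z ω, X ω) ∂P
      = ∫ ω, (Z ω * f1 (X ω) - f0 (X ω) + Z ω * f0 (X ω)) ∂P := by simp_rw [hpt]
    _ = ∫ ω, Z ω * f1 (X ω) ∂P - ∫ ω, f0 (X ω) ∂P + ∫ ω, Z ω * f0 (X ω) ∂P := by
        have hadd : ∫ ω, (Z ω * f1 (X ω) - f0 (X ω) + Z ω * f0 (X ω)) ∂P
            = ∫ ω, (Z ω * f1 (X ω) - f0 (X ω)) ∂P + ∫ ω, Z ω * f0 (X ω) ∂P :=
          integral_add (i1.sub i0) i0'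
        rw [hadd, integral_sub i1 i0]
    _ = ∫ ω, g (1, X ω) ∂P - ∫ ω, g (0, X ω) ∂P := by rw [e1, e0]; linarith [A, B']
    _ = ∫ ω, (g (1, X ω) - g (0, X ω)) ∂P := (integral_sub ig1 ig0).symm
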